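/- arXiv:1801.06793 — 2 statements merged into one kernel-verified Lean document; each statement's English description precedes it below -/
import Mathlib

section
/- The record domain constructor is monotonic with respect to the subdomain relation: if D is a subdomain of D' (i.e., the universe of D is a subset of that of D', the ordering on D is the restriction of that on D', consistency in D coincides with consistency in D' restricted to D, lubs of consistent pairs in D agree with those in D', and both share the same bottom), then L ⊸ D is a subdomain of L ⊸ D'. -/
structure RecFn (L D : Type*) where
  f : L → Option D
  fin : {l | (f l).isSome}.Finite

inductive Rec (L D : Type*) where
  | bot : Rec L D
  | node : RecFn L D → Rec L D

def RecFn.shape {L D : Type*} (r : RecFn L D) : Set L := {l | (r.f l).isSome}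

def recLe {L D : Type*} (le : D → D → Prop) : Rec L D → Rec L D → Prop
  | .bot, _ => True
  | .node _, .bot => False
  | .node r, .node r' =>
      r.shape = r'.shape ∧ ∀ l d d', r.f l = some d → r'.f l = some d' → le d d'

/-- Consistency of `x` and `y` within a subset `A` of an ambient ordered universe. -/
def ConsistentIn {U : Type*} (le : U → U → Prop) (A : Set U) (x y : U) : Prop :=
  ∃ u ∈ A, le x u ∧ le y u

/-- `s` is the least upper bound of `x` and `y` within the subset `A`. -/
def IsLubIn {U : Type*} (le : U → U → Prop) (A : Set U) (x y s : U) : Prop :=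
  s ∈ A ∧ le x s ∧ le y s ∧ ∀ t ∈ A, le x t → le y t → le s t

/-- The subdomain relation `A ⋐ B`: the universe of `A` is a subset of that of `B`
(the ordering being the restriction of the ambient one), both share the bottom
element, consistency in `A` coincides with consistency in `B` restricted to `A`,
and lubs of consistent pairs in `A` agree with those in `B`. -/
def Subdomain {U : Type*} (le : U → U → Prop) (bot : U) (A B : Set U) : Prop :=
  A ⊆ B ∧ bot ∈ A ∧ bot ∈ B ∧ (∀ x ∈ A, le bot x) ∧ (∀ x ∈ B, le bot x) ∧
  (∀ x ∈ A, ∀ y ∈ A, (ConsistentIn le A x y ↔ ConsistentIn le B x y)) ∧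
  (∀ x ∈ A, ∀ y ∈ A, ∀ s, IsLubIn le A x y s → IsLubIn le B x y s)

/-- The record construction applied to a subset `A` of the value universe:
bottom together with all record functions whose values lie in `A`. -/
def RecSet {L D : Type*} (A : Set D) : Set (Rec L D) :=
  {x | x = Rec.bot ∨ ∃ r : RecFn L D, x = Rec.node r ∧ ∀ l d, r.f l = some d → d ∈ A}

lemma recLe_refl {L U : Type*} {le : U → U → Prop} (hrefl : Reflexive le) :
    ∀ x : Rec L U, recLe le x x := by
  intro x
  cases x with
  | bot => trivial
  | node r =>
      refine ⟨rfl, fun l d d' h1 h2 => ?_⟩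
      rw [h1] at h2; cases h2; exact hrefl d

lemma recLe_trans {L U : Type*} {le : U → U → Prop} (htrans : Transitive le) :
    ∀ x y z : Rec L U, recLe le x y → recLe le y z → recLe le x z := by
  intro x y z hxy hyz
  cases x with
  | bot => trivial
  | node r =>
    cases y with
    | bot => exact absurd hxy (by simp [recLe])
    | node r' =>
      cases z with
      | bot => exact absurd hyz (by simp [recLe])
      | node r'' =>
        obtain ⟨hs1, hp1⟩ := hxy
        obtain ⟨hs2, hp2⟩ := hyz
        refine ⟨hs1.trans hs2, fun l d d'' h1 h2 => ?_⟩
        have hl : l ∈ r'.shape := hs1 ▸ (by simp [RecFn.shape, h1])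
        obtain ⟨d', hd'⟩ := Option.isSome_iff_exists.mp hl
        exact htrans (hp1 l d d' h1 hd') (hp2 l d' d'' hd' h2)

/-- the record domain constructor is monotonic with respect to the
subdomain relation: if `D ⋐ D'` then `L ⊸ D ⋐ L ⊸ D'`. -/
theorem recSet_mono {L U : Type*} (le : U → U → Prop)
    (hrefl : Reflexive le) (htrans : Transitive le) (bot : U) (A B : Set U)
    (h : Subdomain le bot A B) :
    Subdomain (recLe le) Rec.bot (RecSet (L := L) A) (RecSet (L := L) B) := by
  classical
  obtain ⟨hAB, hbA, hbB, hbotA, hbotB, hcons, hlub⟩ := h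
  have hsub : RecSet (L := L) A ⊆ RecSet (L := L) B := by
    rintro x (rfl | ⟨r, rfl, hr⟩)
    · exact Or.inl rfl
    · exact Or.inr ⟨r, rfl, fun l d hd => hAB (hr l d hd)⟩
  refine ⟨hsub, Or.inl rfl, Or.inl rfl, fun x _ => trivial, fun x _ => trivial, ?_, ?_⟩
  · -- consistency
    intro x hxA y hyA
    constructor
    · rintro ⟨u, huA, hxu, hyu⟩
      exact ⟨u, hsub huA, hxu, hyu⟩
    · rintro ⟨u, huB, hxu, hyu⟩
      cases x with
      | bot => exact ⟨y, hyA, trivial, recLe_refl hrefl y⟩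
      | node r =>
        cases y with
        | bot => exact ⟨Rec.node r, hxA, recLe_refl hrefl _, trivial⟩
        | node r' =>
          cases u with
          | bot => exact absurd hxu (by simp [recLe])
          | node ru =>
            obtain ⟨hs1, hp1⟩ := hxu
            obtain ⟨hs2, hp2⟩ := hyu
            have hss : r.shape = r'.shape := hs1.trans hs2.symm
            have hrA : ∀ l d, r.f l = some d → d ∈ A := by
              rcases hxA with hx | ⟨r0, heq, h0⟩
              · exact absurd hx (by simp)
              · cases heq; exact h0
            have hr'A : ∀ l d, r'.f l = some d → d ∈ A := by
              rcases hyA with hy | ⟨r0, heq, h0⟩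
              · exact absurd hy (by simp)
              · cases heq; exact h0
            have hruB : ∀ l d, ru.f l = some d → d ∈ B := by
              rcases huB with hu | ⟨r0, heq, h0⟩
              · exact absurd hu (by simp)
              · cases heq; exact h0
            have key : ∀ l, ∃ o : Option U,
                (r.f l = none → o = none) ∧
                (∀ d d', r.f l = some d → r'.f l = some d' →
                  ∃ v, o = some v ∧ v ∈ A ∧ le d v ∧ le d' v) := by
              intro l
              cases hr : r.f l with
              | none => exact ⟨none, fun _ => rfl, fun d d' hd _ => by cases hd⟩
              | some d =>
                have hl : l ∈ r'.shape := hss ▸ (by simp [RecFn.shape, hr])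
                obtain ⟨d', hd'⟩ := Option.isSome_iff_exists.mp hl
                have hlu : l ∈ ru.shape := hs1 ▸ (by simp [RecFn.shape, hr])
                obtain ⟨du, hdu⟩ := Option.isSome_iff_exists.mp hlu
                have hc : ConsistentIn le B d d' :=
                  ⟨du, hruB l du hdu, hp1 l d du hr hdu, hp2 l d' du hd' hdu⟩
                obtain ⟨v, hvA, hv1, hv2⟩ :=
                  (hcons d (hrA l d hr) d' (hr'A l d' hd')).mpr hc
                refine ⟨some v, by simp, fun e e' he he' => ?_⟩
                cases he
                rw [hd'] at he'; cases he'
                exact ⟨v, rfl, hvA, hv1, hv2⟩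
            choose g hg1 hg2 using key
            have hgsh : {l | (g l).isSome} = r.shape := by
              ext l
              simp only [Set.mem_setOf_eq, RecFn.shape]
              constructor
              · intro hgl
                by_contra hrl
                rw [Option.not_isSome_iff_eq_none] at hrl
                rw [hg1 l hrl] at hgl; simp at hgl
              · intro hrl
                obtain ⟨d, hd⟩ := Option.isSome_iff_exists.mp hrl
                have hl : l ∈ r'.shape := hss ▸ hrl
                obtain ⟨d', hd'⟩ := Option.isSome_iff_exists.mp hl
                obtain ⟨v, hv, _⟩ := hg2 l d d' hd hd'
                simp [hv]
            let w : RecFn L U := ⟨g, hgsh ▸ r.fin⟩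
            have hwA : Rec.node w ∈ RecSet (L := L) A := by
              refine Or.inr ⟨w, rfl, fun l d hd => ?_⟩
              have hdg : g l = some d := hd
              have hl : l ∈ r.shape := hgsh ▸ (by simp [Set.mem_setOf_eq, hdg] : (g l).isSome)
              obtain ⟨dx, hdx⟩ := Option.isSome_iff_exists.mp hl
              have hl' : l ∈ r'.shape := hss ▸ hl
              obtain ⟨dy, hdy⟩ := Option.isSome_iff_exists.mp hl'
              obtain ⟨v, hv, hvA, _, _⟩ := hg2 l dx dy hdx hdy
              have hd2 : g l = some d := hd
              rw [hv] at hd2; cases hd2; exact hvA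
            refine ⟨Rec.node w, hwA, ⟨?_, ?_⟩, ⟨?_, ?_⟩⟩
            · show r.shape = {l | (g l).isSome}
              exact hgsh.symm
            · intro l d d' hd hd'
              have hl' : l ∈ r'.shape := hss ▸ (by simp [RecFn.shape, hd])
              obtain ⟨dy, hdy⟩ := Option.isSome_iff_exists.mp hl'
              obtain ⟨v, hv, _, hle1, _⟩ := hg2 l d dy hd hdy
              have hd2 : g l = some d' := hd'
              rw [hv] at hd2; cases hd2; exact hle1
            · show r'.shape = {l | (g l).isSome}
              exact hss ▸ hgsh.symm
            · intro l d' dg hd' hdg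
              have hl : l ∈ r.shape := hss.symm ▸ (by simp [RecFn.shape, hd'])
              obtain ⟨dx, hdx⟩ := Option.isSome_iff_exists.mp hl
              obtain ⟨v, hv, _, _, hle2⟩ := hg2 l dx d' hdx hd'
              have hd2 : g l = some dg := hdg
              rw [hv] at hd2; cases hd2; exact hle2
  · -- lubs
    intro x hxA y hyA s ⟨hsA, hxs, hys, hleast⟩
    refine ⟨hsub hsA, hxs, hys, fun t htB hxt hyt => ?_⟩
    cases x with
    | bot =>
      have h1 : recLe le s y := hleast y hyA trivial (recLe_refl hrefl y)
      exact recLe_trans htrans s y t h1 hyt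
    | node r =>
      cases y with
      | bot =>
        have h1 : recLe le s (Rec.node r) :=
          hleast (Rec.node r) hxA (recLe_refl hrefl _) trivial
        exact recLe_trans htrans s _ t h1 hxt
      | node r' =>
        cases t with
        | bot => exact absurd hxt (by simp [recLe])
        | node rt =>
          cases s with
          | bot => exact absurd hxs (by simp [recLe])
          | node rs =>
            obtain ⟨hsx, hpx⟩ := hxs
            obtain ⟨hsy, hpy⟩ := hys
            obtain ⟨htx, hptx⟩ := hxt
            obtain ⟨hty, hpty⟩ := hyt
            have hrsA : ∀ l d, rs.f l = some d → d ∈ A := by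
              rcases hsA with hx | ⟨r0, heq, h0⟩
              · exact absurd hx (by simp)
              · cases heq; exact h0
            have hrA : ∀ l d, r.f l = some d → d ∈ A := by
              rcases hxA with hx | ⟨r0, heq, h0⟩
              · exact absurd hx (by simp)
              · cases heq; exact h0
            have hr'A : ∀ l d, r'.f l = some d → d ∈ A := by
              rcases hyA with hy | ⟨r0, heq, h0⟩
              · exact absurd hy (by simp)
              · cases heq; exact h0
            have hrtB : ∀ l d, rt.f l = some d → d ∈ B := by
              rcases htB with ht | ⟨r0, heq, h0⟩
              · exact absurd ht (by simp)
              · cases heq; exact h0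
            refine ⟨hsx.symm.trans htx, fun l d d'' hd hd'' => ?_⟩
            have hl : l ∈ r.shape := hsx ▸ (by simp [RecFn.shape, hd] : l ∈ rs.shape)
            obtain ⟨dx, hdx⟩ := Option.isSome_iff_exists.mp hl
            have hl' : l ∈ r'.shape := hsy ▸ (hsx ▸ (by simp [RecFn.shape, hd] : l ∈ rs.shape))
            obtain ⟨dy, hdy⟩ := Option.isSome_iff_exists.mp hl'
            -- d is the lub of dx, dy in A
            have hdlubA : IsLubIn le A dx dy d := by
              refine ⟨hrsA l d hd, hpx l dx d hdx hd, hpy l dy d hdy hd, ?_⟩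
              intro u huA hxu hyu
              -- build w = rs with value at l replaced by u
              have hfin : {l' | ((fun l' => if l' = l then some u else rs.f l') l').isSome}.Finite := by
                apply Set.Finite.subset (rs.fin.union (Set.finite_singleton l))
                intro l' hl'
                simp only [Set.mem_setOf_eq] at hl'
                by_cases hll : l' = l
                · exact Or.inr hll
                · rw [if_neg hll] at hl'; exact Or.inl hl'
              let w : RecFn L U := ⟨fun l' => if l' = l then some u else rs.f l', hfin⟩
              have hwsh : w.shape = rs.shape := by
                ext l'
                simp only [RecFn.shape, Set.mem_setOf_eq, w]
                by_cases hll : l' = l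
                · subst hll; simp [hd]
                · rw [if_neg hll]
              have hwA : Rec.node w ∈ RecSet (L := L) A := by
                refine Or.inr ⟨w, rfl, fun l' e he => ?_⟩
                by_cases hll : l' = l
                · subst hll
                  have : some u = some e := by simpa [w, if_pos rfl] using he
                  cases this; exact huA
                · have : rs.f l' = some e := by simpa [w, if_neg hll] using he
                  exact hrsA l' e this
              have hxw : recLe le (Rec.node r) (Rec.node w) := by
                refine ⟨hsx.trans hwsh.symm, fun l' e e' he he' => ?_⟩
                by_cases hll : l' = l
                · subst hll
                  have h1 : (some dx : Option U) = some e := hdx ▸ he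
                  cases h1
                  have h2 : some u = some e' := by simpa [w, if_pos rfl] using he'
                  cases h2; exact hxu
                · have h2 : rs.f l' = some e' := by simpa [w, if_neg hll] using he'
                  exact hpx l' e e' he h2
              have hyw : recLe le (Rec.node r') (Rec.node w) := by
                refine ⟨hsy.trans hwsh.symm, fun l' e e' he he' => ?_⟩
                by_cases hll : l' = l
                · subst hll
                  have h1 : (some dy : Option U) = some e := hdy ▸ he
                  cases h1
                  have h2 : some u = some e' := by simpa [w, if_pos rfl] using he'
                  cases h2; exact hyu
                · have h2 : rs.f l' = some e' := by simpa [w, if_neg hll] using he'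
                  exact hpy l' e e' he h2
              obtain ⟨_, hpw⟩ := hleast (Rec.node w) hwA hxw hyw
              have hwl : w.f l = some u := by simp [w]
              exact hpw l d u hd hwl
            have hdlubB : IsLubIn le B dx dy d :=
              hlub dx (hrA l dx hdx) dy (hr'A l dy hdy) d hdlubA
            exact hdlubB.2.2.2 d'' (hrtB l d'' hd'') (hptx l dx d'' hdx hd'')
              (hpty l dy d'' hdy hd'')
end

section
/- The record domain constructor preserves least upper bounds of chains of domains: if (D_i) is an increasing chain of domains under the subdomain relation with union D = ⋃_i D_i, then L ⊸ D equals the union ⋃_i (L ⊸ D_i). In particular, every record function over D with values in the union lies in some L ⊸ D_i, because its finitely many values all appear in a single D_i. -/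
/-- the record domain constructor preserves least upper bounds of
chains of domains: for an increasing chain `D_i` of domains under the subdomain
relation, `L ⊸ (⋃ i, D_i) = ⋃ i, (L ⊸ D_i)`; in particular every record function
with values in the union lies in some `L ⊸ D_i`, its finitely many values all
appearing in a single `D_i`. -/
theorem recSet_continuous {L U : Type*} (le : U → U → Prop)
    (hrefl : Reflexive le) (htrans : Transitive le) (bot : U) (Dch : ℕ → Set U)
    (hchain : ∀ i, Subdomain le bot (Dch i) (Dch (i + 1))) :
    RecSet (L := L) (⋃ i, Dch i) = ⋃ i, RecSet (L := L) (Dch i) := by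

  have mono : ∀ i j, i ≤ j → Dch i ⊆ Dch j := by
    intro i j hij
    induction j with
    | zero => simp at hij; subst hij; exact fun _ h => h
    | succ k ih =>
      rcases Nat.lt_or_ge i (k+1) with h | h
      · exact fun x hx => (hchain k).1 (ih (Nat.lt_succ_iff.mp h) hx)
      · have : i = k + 1 := le_antisymm hij h
        subst this; exact fun _ h => h
  ext x
  constructor
  · rintro (rfl | ⟨r, rfl, hr⟩)
    · exact Set.mem_iUnion.mpr ⟨0, Or.inl rfl⟩
    · classical
      have hF : ∀ l ∈ r.fin.toFinset, ∃ i, ∀ d, r.f l = some d → d ∈ Dch i := by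
        intro l hl
        simp only [Set.Finite.mem_toFinset, Set.mem_setOf_eq] at hl
        obtain ⟨d, hd⟩ := Option.isSome_iff_exists.mp hl
        obtain ⟨_, ⟨i, rfl⟩, hi⟩ := hr l d hd
        exact ⟨i, fun d' hd' => by rw [hd'] at hd; cases hd; exact hi⟩
      choose g hg using hF
      set N := (r.fin.toFinset).attach.sup (fun l => g l.1 l.2) with hN
      refine Set.mem_iUnion.mpr ⟨N, Or.inr ⟨r, rfl, ?_⟩⟩
      intro l d hd
      have hl : l ∈ r.fin.toFinset := by
        simp only [Set.Finite.mem_toFinset, Set.mem_setOf_eq, hd, Option.isSome_some]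
      have hle : g l hl ≤ N := Finset.le_sup (f := fun l : {x // x ∈ r.fin.toFinset} => g l.1 l.2)
        (Finset.mem_attach _ ⟨l, hl⟩)
      exact mono _ _ hle (hg l hl d hd)
  · intro hx
    obtain ⟨_, ⟨i, rfl⟩, hi⟩ := hx
    rcases hi with rfl | ⟨r, rfl, hr⟩
    · exact Or.inl rfl
    · exact Or.inr ⟨r, rfl, fun l d hd => Set.mem_iUnion.mpr ⟨i, hr l d hd⟩⟩
end
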